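/- Let α_t, β_t > 0 with Σ_t α_t = Σ_t β_t = 1, γ_t = β_t/α_t, θ ∈ [0,1], η₁ ≥ 0, and Δ(θ) = Σ_{t=1}^T α_t (1 − θ(1−γ_t))² (1−γ_t)/(1 + η₁ γ_t). Then Δ(0) ≥ 0 and Δ(1) ≤ 0. -/
import Mathlib


open Finset

/-- With `γ_t = β_t/α_t` and
`Δ(θ) = Σ_t α_t (1 − θ(1−γ_t))² (1−γ_t)/(1 + η₁ γ_t)`, one has `Δ(0) ≥ 0` and
`Δ(1) ≤ 0`. -/
theorem stmt16 {T : ℕ}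
    (α β : Fin T → ℝ) (hα : ∀ t, 0 < α t) (hβ : ∀ t, 0 < β t)
    (hαsum : ∑ t, α t = 1) (hβsum : ∑ t, β t = 1)
    (η₁ : ℝ) (hη₁ : 0 ≤ η₁)
    (γ : Fin T → ℝ) (hγ : ∀ t, γ t = β t / α t)
    (Δ : ℝ → ℝ)
    (hΔ : ∀ θ : ℝ, Δ θ =
      ∑ t, α t * (1 - θ * (1 - γ t)) ^ 2 * (1 - γ t) / (1 + η₁ * γ t)) :
    0 ≤ Δ 0 ∧ Δ 1 ≤ 0 := by
  have hγpos : ∀ t, 0 < γ t := fun t => by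
    rw [hγ]; exact div_pos (hβ t) (hα t)
  have hden : ∀ t, 0 < 1 + η₁ * γ t := fun t => by
    have := hγpos t; nlinarith
  have hd1 : (0:ℝ) < 1 + η₁ := by linarith
  have hαγ : ∀ t, α t * γ t = β t := fun t => by
    rw [hγ, mul_div_cancel₀ _ (hα t).ne']
  have hzero : ∑ t, α t * (1 - γ t) / (1 + η₁) = 0 := by
    rw [← Finset.sum_div]
    have : ∑ t, α t * (1 - γ t) = 0 := by
      have : ∀ t ∈ Finset.univ, α t * (1 - γ t) = α t - β t := fun t _ => by
        rw [mul_sub, hαγ, mul_one]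
      rw [Finset.sum_congr rfl this, Finset.sum_sub_distrib, hαsum, hβsum]
      ring
    rw [this, zero_div]
  constructor
  · rw [hΔ]
    calc (0:ℝ) = ∑ t, α t * (1 - γ t) / (1 + η₁) := hzero.symm
    _ ≤ ∑ t, α t * (1 - (0:ℝ) * (1 - γ t)) ^ 2 * (1 - γ t) / (1 + η₁ * γ t) := by
        apply Finset.sum_le_sum
        intro t _
        rw [div_le_div_iff₀ hd1 (hden t)]
        have h1 := (hα t).le
        have h2 := sq_nonneg (1 - γ t)
        nlinarith [mul_nonneg (mul_nonneg hη₁ h1) h2]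
  · rw [hΔ]
    calc ∑ t, α t * (1 - (1:ℝ) * (1 - γ t)) ^ 2 * (1 - γ t) / (1 + η₁ * γ t)
        ≤ ∑ t, α t * (1 - γ t) / (1 + η₁) := by
          apply Finset.sum_le_sum
          intro t _
          rw [div_le_div_iff₀ (hden t) hd1]
          have h1 := (hα t).le
          have h2 := sq_nonneg (1 - γ t)
          have h3 : 0 < 1 + γ t + η₁ * γ t := by nlinarith [hγpos t]
          nlinarith [mul_nonneg (mul_nonneg h1 h2) h3.le]
    _ = 0 := hzero
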